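/- Let X be a metric space. If 𝒜 ⊆ C(X) has property S uniformly and 𝒟 is a strong refinement of 𝒜, then 𝒟 has property S uniformly. -/
import Mathlib


open Set Topology

/-- The family `C(X)` of nonempty compact connected subsets of a metric space `X`. -/
def compactConnectedSets (X : Type*) [MetricSpace X] : Set (Set X) :=
  {A | IsCompact A ∧ IsConnected A}

/-- For `ε > 0`, membership in `C_ε(X)`: a nonempty compact connected set of
diameter `< ε`. -/
def MemCEps {X : Type*} [MetricSpace X] (ε : ℝ) (B : Set X) : Prop :=
  IsCompact B ∧ IsConnected B ∧ Metric.diam B < ε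

/-- A family `𝒜` of subsets of a metric space `X` has *property S uniformly* (PSU):
for every `ε > 0` there exists `k ∈ ℕ` such that every `A ∈ 𝒜` is the union of a
family of at most `k` members of `C_ε(X)`. -/
def HasPSU {X : Type*} [MetricSpace X] (𝒜 : Set (Set X)) : Prop :=
  ∀ ε : ℝ, 0 < ε → ∃ k : ℕ, ∀ A ∈ 𝒜, ∃ ℬ : Finset (Set X), ℬ.card ≤ k ∧
    (∀ B ∈ ℬ, MemCEps ε B) ∧ A = ⋃₀ (ℬ : Set (Set X))

/-- Let `X` be a metric space.  If `𝒜 ⊆ C(X)` has property S uniformly and `𝒟 ⊆ C(X)`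
is a strong refinement of `𝒜`, then `𝒟` has property S uniformly. -/
theorem stmt_5 {X : Type*} [MetricSpace X] (𝒜 𝒟 : Set (Set X))
    (h𝒜 : 𝒜 ⊆ compactConnectedSets X) (h𝒟 : 𝒟 ⊆ compactConnectedSets X)
    (hPSU : HasPSU 𝒜)
    (href : ∀ D ∈ 𝒟, ∃ A ∈ 𝒜, D ⊆ A)
    (hstrong : ∀ D ∈ 𝒟, ∀ A ∈ 𝒜, D ⊆ A → ∀ B ⊆ A, IsCompact B → IsConnected B →
      D ∩ B = ∅ ∨ IsConnected (D ∩ B)) :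
    HasPSU 𝒟 := by
  classical
  intro ε hε
  obtain ⟨k, hk⟩ := hPSU ε hε
  refine ⟨k, fun D hD => ?_⟩
  obtain ⟨A, hA, hDA⟩ := href D hD
  obtain ⟨ℬ, hcard, hmem, hunion⟩ := hk A hA
  obtain ⟨hDc, hDconn⟩ := h𝒟 hD
  set ℬ' : Finset (Set X) :=
    (ℬ.filter (fun B => (D ∩ B).Nonempty)).image (fun B => D ∩ B) with hℬ'
  refine ⟨ℬ', ?_, ?_, ?_⟩
  · calc ℬ'.card ≤ (ℬ.filter (fun B => (D ∩ B).Nonempty)).card :=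
          Finset.card_image_le
      _ ≤ ℬ.card := Finset.card_filter_le _ _
      _ ≤ k := hcard
  · intro C hC
    simp only [hℬ', Finset.mem_image, Finset.mem_filter] at hC
    obtain ⟨B, ⟨hB, hne⟩, rfl⟩ := hC
    obtain ⟨hBc, hBconn, hBd⟩ := hmem B hB
    have hBA : B ⊆ A := by
      rw [hunion]; exact subset_sUnion_of_mem hB
    have hconn : IsConnected (D ∩ B) := by
      rcases hstrong D hD A hA hDA B hBA hBc hBconn with h | h
      · exact absurd h (Set.nonempty_iff_ne_empty.mp hne)
      · exact h
    refine ⟨hDc.inter hBc, hconn, ?_⟩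
    exact lt_of_le_of_lt
      (Metric.diam_mono Set.inter_subset_right hBc.isBounded) hBd
  · apply Set.Subset.antisymm
    · intro x hx
      have hxA : x ∈ ⋃₀ (ℬ : Set (Set X)) := by rw [← hunion]; exact hDA hx
      obtain ⟨B, hB, hxB⟩ := hxA
      refine ⟨D ∩ B, ?_, hx, hxB⟩
      simp only [hℬ', Finset.coe_image, Finset.coe_filter]
      exact ⟨B, ⟨hB, ⟨x, hx, hxB⟩⟩, rfl⟩
    · intro x hx
      obtain ⟨C, hC, hxC⟩ := hx
      simp only [hℬ', Finset.coe_image, Finset.coe_filter] at hC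
      obtain ⟨B, _, rfl⟩ := hC
      exact hxC.1
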